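/- Let α ∈ ℂ^m ⊗ ℂ^n be a nonzero vector that is not a simple tensor (i.e., there are no u ∈ ℂ^m, v ∈ ℂ^n with α = u ⊗ v), let γ ∈ ℂ^m be nonzero, and let δ be a nonzero positive semidefinite matrix on ℂ^n. Then the positive semidefinite matrix αα^* + (γγ^*) ⊗ δ on ℂ^m ⊗ ℂ^n is entangled (not separable). -/

import Mathlib

open scoped BigOperators ComplexOrder
open Kronecker

noncomputable section

/-- The `j`-th standard basis vector of `ℂ^q` (zero if `j ≥ q`). -/
def ee (q : ℕ) (j : ℕ) : Fin q → ℂ := fun b => if (b : ℕ) = j then 1 else 0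

/-- Tensor (Kronecker) product of two vectors. -/
def tens {A B : Type*} (x : A → ℂ) (y : B → ℂ) : A × B → ℂ := fun p => x p.1 * y p.2

/-- A matrix on `ℂ^A ⊗ ℂ^B` is separable if it is a finite sum of Kronecker products of
rank-one positive semidefinite matrices. -/
def IsSep {A B : Type*} (ρ : Matrix (A × B) (A × B) ℂ) : Prop :=
  ∃ (T : ℕ) (x : Fin T → A → ℂ) (y : Fin T → B → ℂ),
    ρ = ∑ t : Fin T, Matrix.of (fun p q : A × B =>
      (x t p.1 * (starRingEnd ℂ) (x t q.1)) * (y t p.2 * (starRingEnd ℂ) (y t q.2)))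

/-- Partial trace over the middle (B) system of the rank-one projection `|Ψ⟩⟨Ψ|`. -/
def TrB {A B : Type*} [Fintype B] {k : ℕ} (Ψ : A × B × Fin k → ℂ) :
    Matrix (A × Fin k) (A × Fin k) ℂ :=
  Matrix.of fun p q => ∑ b : B, Ψ (p.1, b, p.2) * (starRingEnd ℂ) (Ψ (q.1, b, q.2))

/-- A subspace `V ⊆ ℂ^A ⊗ ℂ^B` is entanglement breaking if for every ancilla dimension
`k ≥ 1` and every `Ψ` whose slices all lie in `V`, the matrix `Tr_B |Ψ⟩⟨Ψ|` is separable. -/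
def IsEBSpace {A B : Type*} [Fintype B] (V : Submodule ℂ (A × B → ℂ)) : Prop :=
  ∀ (k : ℕ), 1 ≤ k → ∀ Ψ : A × B × Fin k → ℂ,
    (∀ ℓ : Fin k, (fun ab : A × B => Ψ (ab.1, ab.2, ℓ)) ∈ V) → IsSep (TrB Ψ)

/-- Partial transpose on the B system. -/
def PT {A B : Type*} (ρ : Matrix (A × B) (A × B) ℂ) : Matrix (A × B) (A × B) ℂ :=
  Matrix.of fun p q => ρ (p.1, q.2) (q.1, p.2)

/-- Partial trace over the B system of a matrix. -/
def trBmat {A B : Type*} [Fintype B] (ρ : Matrix (A × B) (A × B) ℂ) : Matrix A A ℂ :=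
  Matrix.of fun a a' => ∑ b : B, ρ (a, b) (a', b)

/-- Partial trace over the A system of a matrix. -/
def trAmat {A B : Type*} [Fintype A] (ρ : Matrix (A × B) (A × B) ℂ) : Matrix B B ℂ :=
  Matrix.of fun b b' => ∑ a : A, ρ (a, b) (a, b')
private lemma vec_zero_of_sum {k : ℕ} (w : Fin k → ℂ)
    (h : ∑ a, (starRingEnd ℂ) (w a) * w a = 0) : w = 0 := by
  have h' : ((∑ a, Complex.normSq (w a) : ℝ) : ℂ) = 0 := by
    push_cast
    simpa [Complex.normSq_eq_conj_mul_self] using h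
  have hr : ∑ a, Complex.normSq (w a) = 0 := by exact_mod_cast h'
  funext a
  have := (Finset.sum_eq_zero_iff_of_nonneg (fun i _ => Complex.normSq_nonneg _)).mp hr a
    (Finset.mem_univ a)
  simpa [Complex.normSq_eq_zero] using this

private lemma sum4_swap {m n : ℕ} (f : Fin m → Fin n → Fin m → Fin n → ℂ) :
    ∑ a, ∑ b, ∑ a', ∑ b', f a b a' b' = ∑ b, ∑ b', ∑ a, ∑ a', f a b a' b' := by
  rw [Finset.sum_comm]
  refine Finset.sum_congr rfl fun b _ => ?_
  calc ∑ a, ∑ a', ∑ b', f a b a' b'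
      = ∑ a, ∑ b', ∑ a', f a b a' b' :=
        Finset.sum_congr rfl fun a _ => Finset.sum_comm
    _ = ∑ b', ∑ a, ∑ a', f a b a' b' := Finset.sum_comm

private lemma double_factor {n : ℕ} (f g : Fin n → ℂ) :
    (∑ b, ∑ b', f b * g b') = (∑ b, f b) * (∑ b', g b') := by
  rw [Finset.sum_mul_sum]

private lemma sep_nonneg {m n : ℕ} (ρ : Matrix (Fin m × Fin n) (Fin m × Fin n) ℂ)
    (h : IsSep ρ) (z : Fin m × Fin n → ℂ) :
    0 ≤ (∑ P : Fin m × Fin n, ∑ Q : Fin m × Fin n,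
          (starRingEnd ℂ) (z P) * ρ (P.1, Q.2) (Q.1, P.2) * z Q).re := by
  obtain ⟨T, x, y, rfl⟩ := h
  set S : Fin T → ℂ := fun t => ∑ Q : Fin m × Fin n, z Q * (starRingEnd ℂ) (x t Q.1) * y t Q.2
    with hS
  have key : (∑ P : Fin m × Fin n, ∑ Q : Fin m × Fin n,
      (starRingEnd ℂ) (z P) *
        (∑ t : Fin T, Matrix.of (fun p q : Fin m × Fin n =>
          (x t p.1 * (starRingEnd ℂ) (x t q.1)) * (y t p.2 * (starRingEnd ℂ) (y t q.2))))
          (P.1, Q.2) (Q.1, P.2) * z Q)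
      = ∑ t : Fin T, ((Complex.normSq (S t) : ℝ) : ℂ) := by
    simp only [Matrix.sum_apply, Matrix.of_apply, Finset.mul_sum, Finset.sum_mul]
    calc (∑ P : Fin m × Fin n, ∑ Q : Fin m × Fin n, ∑ t : Fin T,
            (starRingEnd ℂ) (z P) *
              ((x t P.1 * (starRingEnd ℂ) (x t Q.1)) * (y t Q.2 * (starRingEnd ℂ) (y t P.2))) * z Q)
        = ∑ P : Fin m × Fin n, ∑ t : Fin T, ∑ Q : Fin m × Fin n,
            (starRingEnd ℂ) (z P) *
              ((x t P.1 * (starRingEnd ℂ) (x t Q.1)) * (y t Q.2 * (starRingEnd ℂ) (y t P.2))) * z Q :=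
          Finset.sum_congr rfl fun P _ => Finset.sum_comm
      _ = ∑ t : Fin T, ∑ P : Fin m × Fin n, ∑ Q : Fin m × Fin n,
            (starRingEnd ℂ) (z P) *
              ((x t P.1 * (starRingEnd ℂ) (x t Q.1)) * (y t Q.2 * (starRingEnd ℂ) (y t P.2))) * z Q :=
          Finset.sum_comm
      _ = ∑ t : Fin T, (starRingEnd ℂ) (S t) * S t := by
          refine Finset.sum_congr rfl fun t _ => ?_
          have hconj : (starRingEnd ℂ) (S t)
              = ∑ P : Fin m × Fin n, (starRingEnd ℂ) (z P) * x t P.1 * (starRingEnd ℂ) (y t P.2) := by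
            rw [hS]
            simp [map_sum]
          rw [hconj, hS, Finset.sum_mul_sum]
          refine Finset.sum_congr rfl fun P _ => Finset.sum_congr rfl fun Q _ => ?_
          ring
      _ = ∑ t : Fin T, ((Complex.normSq (S t) : ℝ) : ℂ) := by
          refine Finset.sum_congr rfl fun t _ => ?_
          rw [Complex.normSq_eq_conj_mul_self]
  rw [key, ← Complex.ofReal_sum, Complex.ofReal_re]
  exact Finset.sum_nonneg fun t _ => Complex.normSq_nonneg _

private lemma quad_split {m n : ℕ} (α : Fin m × Fin n → ℂ) (γ : Fin m → ℂ)
    (δ : Matrix (Fin n) (Fin n) ℂ) (z : Fin m × Fin n → ℂ) :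
    (∑ P : Fin m × Fin n, ∑ Q : Fin m × Fin n, (starRingEnd ℂ) (z P) *
       (α (P.1, Q.2) * (starRingEnd ℂ) (α (Q.1, P.2))
         + γ P.1 * (starRingEnd ℂ) (γ Q.1) * δ Q.2 P.2) * z Q)
    = (∑ b : Fin n, ∑ b' : Fin n,
        (∑ a, (starRingEnd ℂ) (z (a, b)) * α (a, b'))
          * (starRingEnd ℂ) (∑ a, (starRingEnd ℂ) (z (a, b')) * α (a, b)))
      + (∑ b : Fin n, ∑ b' : Fin n,
        (starRingEnd ℂ) (∑ a, (starRingEnd ℂ) (γ a) * z (a, b)) * δ b' b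
          * (∑ a, (starRingEnd ℂ) (γ a) * z (a, b'))) := by
  have expand : ∀ P Q : Fin m × Fin n, (starRingEnd ℂ) (z P) *
       (α (P.1, Q.2) * (starRingEnd ℂ) (α (Q.1, P.2))
         + γ P.1 * (starRingEnd ℂ) (γ Q.1) * δ Q.2 P.2) * z Q
      = (starRingEnd ℂ) (z P) * (α (P.1, Q.2) * (starRingEnd ℂ) (α (Q.1, P.2))) * z Q
        + (starRingEnd ℂ) (z P) * (γ P.1 * (starRingEnd ℂ) (γ Q.1) * δ Q.2 P.2) * z Q := by
    intro P Q; ring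
  simp only [expand, Finset.sum_add_distrib]
  congr 1
  · calc (∑ P : Fin m × Fin n, ∑ Q : Fin m × Fin n,
            (starRingEnd ℂ) (z P) * (α (P.1, Q.2) * (starRingEnd ℂ) (α (Q.1, P.2))) * z Q)
        = ∑ a, ∑ b, ∑ a', ∑ b', (starRingEnd ℂ) (z (a, b)) *
            (α (a, b') * (starRingEnd ℂ) (α (a', b))) * z (a', b') := by
          rw [Fintype.sum_prod_type]
          exact Finset.sum_congr rfl fun a _ => Finset.sum_congr rfl fun b _ => by
            rw [Fintype.sum_prod_type]
      _ = ∑ b, ∑ b', ∑ a, ∑ a', (starRingEnd ℂ) (z (a, b)) *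
            (α (a, b') * (starRingEnd ℂ) (α (a', b))) * z (a', b') := sum4_swap _
      _ = _ := by
          refine Finset.sum_congr rfl fun b _ => Finset.sum_congr rfl fun b' _ => ?_
          rw [map_sum, Finset.sum_mul_sum]
          refine Finset.sum_congr rfl fun a _ => Finset.sum_congr rfl fun a' _ => ?_
          simp only [map_mul, Complex.conj_conj]
          ring
  · calc (∑ P : Fin m × Fin n, ∑ Q : Fin m × Fin n,
            (starRingEnd ℂ) (z P) * (γ P.1 * (starRingEnd ℂ) (γ Q.1) * δ Q.2 P.2) * z Q)
        = ∑ a, ∑ b, ∑ a', ∑ b', (starRingEnd ℂ) (z (a, b)) *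
            (γ a * (starRingEnd ℂ) (γ a') * δ b' b) * z (a', b') := by
          rw [Fintype.sum_prod_type]
          exact Finset.sum_congr rfl fun a _ => Finset.sum_congr rfl fun b _ => by
            rw [Fintype.sum_prod_type]
      _ = ∑ b, ∑ b', ∑ a, ∑ a', (starRingEnd ℂ) (z (a, b)) *
            (γ a * (starRingEnd ℂ) (γ a') * δ b' b) * z (a', b') := sum4_swap _
      _ = _ := by
          refine Finset.sum_congr rfl fun b _ => Finset.sum_congr rfl fun b' _ => ?_
          rw [map_sum, Finset.sum_mul, Finset.sum_mul_sum]
          refine Finset.sum_congr rfl fun a _ => Finset.sum_congr rfl fun a' _ => ?_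
          simp only [map_mul, Complex.conj_conj]
          ring

/-- If `α` is an entangled pure state and `γγ^* ⊗ δ` a nonzero product positive matrix,
then `αα^* + γγ^* ⊗ δ` is entangled. -/
theorem entangled_pure_plus_product {m n : ℕ}
    (α : Fin m × Fin n → ℂ) (hα : α ≠ 0)
    (hent : ¬ ∃ (u : Fin m → ℂ) (v : Fin n → ℂ), α = tens u v)
    (γ : Fin m → ℂ) (hγ : γ ≠ 0)
    (δ : Matrix (Fin n) (Fin n) ℂ) (hδ : δ.PosSemidef) (hδ0 : δ ≠ 0) :
    ¬ IsSep (Matrix.of (fun p q : Fin m × Fin n =>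
      α p * (starRingEnd ℂ) (α q) + γ p.1 * (starRingEnd ℂ) (γ q.1) * δ p.2 q.2)) := by
  intro hsep
  -- Step 1 : find x ⊥ γ whose row map p is nonzero
  have hG : (∑ a, (starRingEnd ℂ) (γ a) * γ a) ≠ 0 := fun h => hγ (vec_zero_of_sum γ h)
  have step1 : ∃ x : Fin m → ℂ, (∑ a, (starRingEnd ℂ) (γ a) * x a) = 0 ∧
      (fun b => ∑ a, (starRingEnd ℂ) (x a) * α (a, b)) ≠ 0 := by
    by_contra hcon
    push_neg at hcon
    apply hent
    refine ⟨γ, fun b => (∑ a, (starRingEnd ℂ) (γ a) * α (a, b)) /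
      (∑ a, (starRingEnd ℂ) (γ a) * γ a), ?_⟩
    funext P
    obtain ⟨a, b⟩ := P
    set G : ℂ := ∑ a, (starRingEnd ℂ) (γ a) * γ a with hGdef
    set c : ℂ := (∑ a', (starRingEnd ℂ) (γ a') * α (a', b)) / G with hcdef
    set xb : Fin m → ℂ := fun a' => α (a', b) - c * γ a' with hxbdef
    have hxb : (∑ a', (starRingEnd ℂ) (γ a') * xb a') = 0 := by
      have e : ∀ a', (starRingEnd ℂ) (γ a') * xb a'
          = (starRingEnd ℂ) (γ a') * α (a', b) - c * ((starRingEnd ℂ) (γ a') * γ a') := by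
        intro a'; simp only [hxbdef]; ring
      rw [Finset.sum_congr rfl fun a' _ => e a', Finset.sum_sub_distrib, ← Finset.mul_sum,
        ← hGdef, hcdef, div_mul_cancel₀ _ hG, sub_self]
    have h0 := congrFun (hcon xb hxb) b
    simp only [Pi.zero_apply] at h0
    have hxg : (∑ a', (starRingEnd ℂ) (xb a') * γ a') = 0 := by
      have e : (∑ a', (starRingEnd ℂ) (xb a') * γ a')
          = (starRingEnd ℂ) (∑ a', (starRingEnd ℂ) (γ a') * xb a') := by
        rw [map_sum]
        exact Finset.sum_congr rfl fun a' _ => by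
          simp only [map_mul, Complex.conj_conj]; ring
      rw [e, hxb, map_zero]
    have hxx : (∑ a', (starRingEnd ℂ) (xb a') * xb a') = 0 := by
      have e : ∀ a', (starRingEnd ℂ) (xb a') * xb a'
          = (starRingEnd ℂ) (xb a') * α (a', b) - c * ((starRingEnd ℂ) (xb a') * γ a') := by
        intro a'; simp only [hxbdef]; ring
      rw [Finset.sum_congr rfl fun a' _ => e a', Finset.sum_sub_distrib, ← Finset.mul_sum,
        h0, hxg, mul_zero, sub_self]
    have hz := congrFun (vec_zero_of_sum xb hxx) a
    simp only [hxbdef, Pi.zero_apply, sub_eq_zero] at hz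
    simp only [tens]
    rw [hz]
    ring
  obtain ⟨x, hx, hp0⟩ := step1
  set p : Fin n → ℂ := fun b => ∑ a, (starRingEnd ℂ) (x a) * α (a, b) with hpdef
  -- Step 2 : find a row of α independent from p
  have step2 : ∃ a0 : Fin m, ∀ c : ℂ, (fun b => α (a0, b)) ≠ c • p := by
    by_contra hcon
    push_neg at hcon
    choose c hc using hcon
    apply hent
    refine ⟨c, p, ?_⟩
    funext P
    obtain ⟨a, b⟩ := P
    have := congrFun (hc a) b
    simpa [tens] using this
  obtain ⟨a0, hq0⟩ := step2
  -- the data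
  set y : Fin m → ℂ := fun a => if a = a0 then 1 else 0 with hydef
  set q : Fin n → ℂ := fun b => α (a0, b) with hqdef
  have hyq : ∀ b' : Fin n, (∑ a, (starRingEnd ℂ) (y a) * α (a, b')) = q b' := by
    intro b'
    simp [hydef, apply_ite, ite_mul, Finset.sum_ite_eq']
    rfl
  set g : ℂ := ∑ a, (starRingEnd ℂ) (γ a) * y a with hgdef
  set Np : ℂ := ∑ b, (starRingEnd ℂ) (p b) * p b with hNpdef
  set N : ℝ := ∑ b, Complex.normSq (p b) with hNdef
  have hNp : Np = (N : ℂ) := by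
    rw [hNpdef, hNdef]
    push_cast
    exact Finset.sum_congr rfl fun b _ => (Complex.normSq_eq_conj_mul_self).symm
  have hNpos : 0 < N := by
    obtain ⟨b, hb⟩ : ∃ b, p b ≠ 0 := by
      by_contra h; push_neg at h; exact hp0 (funext h)
    exact lt_of_lt_of_le (Complex.normSq_pos.mpr hb)
      (Finset.single_le_sum (fun i _ => Complex.normSq_nonneg _) (Finset.mem_univ b))
  have hNp0 : Np ≠ 0 := by rw [hNp]; exact_mod_cast ne_of_gt hNpos
  set cpq : ℂ := ∑ b, (starRingEnd ℂ) (p b) * q b with hcpqdef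
  set μ0 : Fin n → ℂ := fun b => q b - (cpq / Np) * p b with hμ0def
  have he1 : (∑ b, (starRingEnd ℂ) (p b) * μ0 b) = 0 := by
    have e : ∀ b, (starRingEnd ℂ) (p b) * μ0 b
        = (starRingEnd ℂ) (p b) * q b - (cpq / Np) * ((starRingEnd ℂ) (p b) * p b) := by
      intro b; simp only [hμ0def]; ring
    rw [Finset.sum_congr rfl fun b _ => e b, Finset.sum_sub_distrib, ← Finset.mul_sum,
      ← hNpdef, ← hcpqdef, div_mul_cancel₀ _ hNp0, sub_self]
  set Kc : ℂ := ∑ b, (starRingEnd ℂ) (μ0 b) * μ0 b with hKcdef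
  set K : ℝ := ∑ b, Complex.normSq (μ0 b) with hKdef
  have hKc : Kc = (K : ℂ) := by
    rw [hKcdef, hKdef]
    push_cast
    exact Finset.sum_congr rfl fun b _ => (Complex.normSq_eq_conj_mul_self).symm
  have he2 : (∑ b, (starRingEnd ℂ) (q b) * μ0 b) = Kc := by
    have e : ∀ b, (starRingEnd ℂ) (μ0 b) * μ0 b
        = (starRingEnd ℂ) (q b) * μ0 b
          - (starRingEnd ℂ) (cpq / Np) * ((starRingEnd ℂ) (p b) * μ0 b) := by
      intro b; simp only [hμ0def, map_sub, map_mul]; ring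
    rw [hKcdef, Finset.sum_congr rfl fun b _ => e b, Finset.sum_sub_distrib, ← Finset.mul_sum,
      he1, mul_zero, sub_zero]
  have hμ0ne : μ0 ≠ 0 := by
    intro h
    apply hq0 (cpq / Np)
    funext b
    have hb := congrFun h b
    simp only [hμ0def, Pi.zero_apply, sub_eq_zero] at hb
    simpa [hqdef] using hb
  have hKpos : 0 < K := by
    obtain ⟨b, hb⟩ : ∃ b, μ0 b ≠ 0 := by
      by_contra h; push_neg at h; exact hμ0ne (funext h)
    exact lt_of_lt_of_le (Complex.normSq_pos.mpr hb)
      (Finset.single_le_sum (fun i _ => Complex.normSq_nonneg _) (Finset.mem_univ b))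
  set e4 : ℂ := ∑ b, (starRingEnd ℂ) (q b) * p b with he4def
  set E : ℂ := ∑ b, ∑ b', p b * δ b' b * (starRingEnd ℂ) (p b') with hEdef
  set D : ℝ := Complex.normSq e4 + Complex.normSq g * E.re with hDdef
  set t : ℝ := (D + 1) / (2 * K * N) with htdef
  set μ : Fin n → ℂ := fun b => -(t : ℂ) * μ0 b with hμdef
  set z : Fin m × Fin n → ℂ :=
    fun P => (starRingEnd ℂ) (μ P.2) * x P.1 + (starRingEnd ℂ) (p P.2) * y P.1 with hzdef
  -- the two slice computations
  have hC : ∀ b b' : Fin n, (∑ a, (starRingEnd ℂ) (z (a, b)) * α (a, b'))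
      = μ b * p b' + p b * q b' := by
    intro b b'
    have e : ∀ a, (starRingEnd ℂ) (z (a, b)) * α (a, b')
        = μ b * ((starRingEnd ℂ) (x a) * α (a, b'))
          + p b * ((starRingEnd ℂ) (y a) * α (a, b')) := by
      intro a
      simp only [hzdef, map_add, map_mul, Complex.conj_conj]
      ring
    rw [Finset.sum_congr rfl fun a _ => e a, Finset.sum_add_distrib, ← Finset.mul_sum,
      ← Finset.mul_sum, hyq b']
  have hs : ∀ b : Fin n, (∑ a, (starRingEnd ℂ) (γ a) * z (a, b))
      = (starRingEnd ℂ) (p b) * g := by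
    intro b
    have e : ∀ a, (starRingEnd ℂ) (γ a) * z (a, b)
        = (starRingEnd ℂ) (μ b) * ((starRingEnd ℂ) (γ a) * x a)
          + (starRingEnd ℂ) (p b) * ((starRingEnd ℂ) (γ a) * y a) := by
      intro a; simp only [hzdef]; ring
    rw [Finset.sum_congr rfl fun a _ => e a, Finset.sum_add_distrib, ← Finset.mul_sum,
      ← Finset.mul_sum, hx, mul_zero, zero_add, hgdef]
  -- scalar values of the four factored sums
  have hA1 : (∑ b, μ b * (starRingEnd ℂ) (p b)) = 0 := by
    have e : ∀ b, μ b * (starRingEnd ℂ) (p b)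
        = -(t : ℂ) * ((starRingEnd ℂ) (p b) * μ0 b) := by
      intro b; simp only [hμdef]; ring
    rw [Finset.sum_congr rfl fun b _ => e b, ← Finset.mul_sum, he1, mul_zero]
  have hA2 : (∑ b, μ b * (starRingEnd ℂ) (q b)) = -(t : ℂ) * Kc := by
    have e : ∀ b, μ b * (starRingEnd ℂ) (q b)
        = -(t : ℂ) * ((starRingEnd ℂ) (q b) * μ0 b) := by
      intro b; simp only [hμdef]; ring
    rw [Finset.sum_congr rfl fun b _ => e b, ← Finset.mul_sum, he2]
  have hB2 : (∑ b, p b * (starRingEnd ℂ) (p b)) = Np := by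
    rw [hNpdef]
    exact Finset.sum_congr rfl fun b _ => mul_comm _ _
  have hB3 : (∑ b, q b * (starRingEnd ℂ) (μ b)) = -(t : ℂ) * Kc := by
    have e : ∀ b, q b * (starRingEnd ℂ) (μ b)
        = -(t : ℂ) * (starRingEnd ℂ) ((starRingEnd ℂ) (q b) * μ0 b) := by
      intro b
      simp only [hμdef, map_mul, map_neg, Complex.conj_ofReal, Complex.conj_conj]
      ring
    rw [Finset.sum_congr rfl fun b _ => e b, ← Finset.mul_sum, ← map_sum, he2, hKc,
      Complex.conj_ofReal]
  have hA4 : (∑ b, p b * (starRingEnd ℂ) (q b)) = e4 := by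
    rw [he4def]
    exact Finset.sum_congr rfl fun b _ => mul_comm _ _
  have hB4 : (∑ b, q b * (starRingEnd ℂ) (p b)) = (starRingEnd ℂ) e4 := by
    rw [he4def, map_sum]
    exact Finset.sum_congr rfl fun b _ => by
      simp only [map_mul, Complex.conj_conj]; try ring
  -- the α-part of the quadratic form
  have hF : (∑ b : Fin n, ∑ b' : Fin n,
        (∑ a, (starRingEnd ℂ) (z (a, b)) * α (a, b'))
          * (starRingEnd ℂ) (∑ a, (starRingEnd ℂ) (z (a, b')) * α (a, b)))
      = -(t : ℂ) * Kc * Np + (Np * (-(t : ℂ) * Kc) + e4 * (starRingEnd ℂ) e4) := by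
    calc (∑ b : Fin n, ∑ b' : Fin n,
          (∑ a, (starRingEnd ℂ) (z (a, b)) * α (a, b'))
            * (starRingEnd ℂ) (∑ a, (starRingEnd ℂ) (z (a, b')) * α (a, b)))
        = ∑ b : Fin n, ∑ b' : Fin n,
            ((μ b * (starRingEnd ℂ) (p b)) * (p b' * (starRingEnd ℂ) (μ b'))
            + ((μ b * (starRingEnd ℂ) (q b)) * (p b' * (starRingEnd ℂ) (p b'))
            + ((p b * (starRingEnd ℂ) (p b)) * (q b' * (starRingEnd ℂ) (μ b'))
            + (p b * (starRingEnd ℂ) (q b)) * (q b' * (starRingEnd ℂ) (p b'))))) := by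
          refine Finset.sum_congr rfl fun b _ => Finset.sum_congr rfl fun b' _ => ?_
          rw [hC b b', hC b' b]
          simp only [map_add, map_mul]
          ring
      _ = (∑ b, μ b * (starRingEnd ℂ) (p b)) * (∑ b', p b' * (starRingEnd ℂ) (μ b'))
          + ((∑ b, μ b * (starRingEnd ℂ) (q b)) * (∑ b', p b' * (starRingEnd ℂ) (p b'))
          + ((∑ b, p b * (starRingEnd ℂ) (p b)) * (∑ b', q b' * (starRingEnd ℂ) (μ b'))
          + (∑ b, p b * (starRingEnd ℂ) (q b)) * (∑ b', q b' * (starRingEnd ℂ) (p b')))) := by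
          simp only [Finset.sum_add_distrib]
          rw [double_factor, double_factor, double_factor, double_factor]
      _ = -(t : ℂ) * Kc * Np + (Np * (-(t : ℂ) * Kc) + e4 * (starRingEnd ℂ) e4) := by
          rw [hA1, hA2, hB2, hB3, hA4, hB4, zero_mul, zero_add]
  -- the δ-part of the quadratic form
  have hFδ : (∑ b : Fin n, ∑ b' : Fin n,
        (starRingEnd ℂ) (∑ a, (starRingEnd ℂ) (γ a) * z (a, b)) * δ b' b
          * (∑ a, (starRingEnd ℂ) (γ a) * z (a, b')))
      = ((starRingEnd ℂ) g * g) * E := by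
    calc (∑ b : Fin n, ∑ b' : Fin n,
          (starRingEnd ℂ) (∑ a, (starRingEnd ℂ) (γ a) * z (a, b)) * δ b' b
            * (∑ a, (starRingEnd ℂ) (γ a) * z (a, b')))
        = ∑ b : Fin n, ∑ b' : Fin n,
            ((starRingEnd ℂ) g * g) * (p b * δ b' b * (starRingEnd ℂ) (p b')) := by
          refine Finset.sum_congr rfl fun b _ => Finset.sum_congr rfl fun b' _ => ?_
          rw [hs b, hs b']
          simp only [map_mul, Complex.conj_conj]
          ring
      _ = ((starRingEnd ℂ) g * g) * E := by
          rw [hEdef]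
          simp only [← Finset.mul_sum]
  -- assemble
  have hge := sep_nonneg _ hsep z
  have hge' : 0 ≤ (∑ P : Fin m × Fin n, ∑ Q : Fin m × Fin n,
      (starRingEnd ℂ) (z P) *
        (α (P.1, Q.2) * (starRingEnd ℂ) (α (Q.1, P.2))
          + γ P.1 * (starRingEnd ℂ) (γ Q.1) * δ Q.2 P.2) * z Q).re := hge
  rw [quad_split α γ δ z, hF, hFδ] at hge'
  have hcast : (-(t : ℂ) * Kc * Np + (Np * (-(t : ℂ) * Kc) + e4 * (starRingEnd ℂ) e4)
      + ((starRingEnd ℂ) g * g) * E)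
      = ((-(t * K * N) + (-(N * (t * K)) + Complex.normSq e4) : ℝ) : ℂ)
        + ((Complex.normSq g : ℝ) : ℂ) * E := by
    rw [hKc, hNp, Complex.mul_conj]
    rw [show (starRingEnd ℂ) g * g = ((Complex.normSq g : ℝ) : ℂ) from
      (Complex.normSq_eq_conj_mul_self).symm]
    push_cast
    ring
  rw [hcast] at hge'
  simp only [Complex.add_re, Complex.ofReal_re, Complex.re_ofReal_mul] at hge'
  -- final arithmetic contradiction
  have h2KN : (0 : ℝ) < 2 * K * N := by positivity
  have hval : -(t * K * N) + (-(N * (t * K)) + Complex.normSq e4)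
      + Complex.normSq g * E.re = -1 := by
    rw [htdef, hDdef]
    field_simp
    ring
  rw [hval] at hge'
  linarith
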